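/- arXiv:2205.05500 — 2 statements merged into one kernel-verified Lean document; each statement's English description precedes it below -/
import Mathlib

section
/- Suppose 2^m ≤ 2^{L}·(m·R/w)^w for some real R ≥ 16 and natural numbers m ≥ w ≥ L ≥ 0 with w ≥ 1. Then m ≤ L + w·log₂(2·R·log₂(R)). -/
set_option maxHeartbeats 1000000

open Real

/-- Key concavity-type bound: `log₂ x ≤ log₂ a + (x - a)/(a log 2)` for `0 < a ≤ x`. -/
lemma my_logb_le_add (a x : ℝ) (ha : 0 < a) (hax : a ≤ x) :
    Real.logb 2 x ≤ Real.logb 2 a + (x - a) / (a * Real.log 2) := by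
  have hx : 0 < x := lt_of_lt_of_le ha hax
  have hlog2 : 0 < Real.log 2 := Real.log_pos one_lt_two
  have h1 : Real.log (x / a) ≤ x / a - 1 :=
    Real.log_le_sub_one_of_pos (by positivity)
  rw [Real.log_div hx.ne' ha.ne'] at h1
  have h2 : Real.log x - Real.log a ≤ (x - a) / a := by
    have : x / a - 1 = (x - a) / a := by field_simp
    linarith [this ▸ h1]
  have h3 : Real.logb 2 x - Real.logb 2 a ≤ (x - a) / (a * Real.log 2) := by
    rw [Real.logb, Real.logb, div_sub_div_same]
    calc (Real.log x - Real.log a) / Real.log 2 ≤ ((x - a) / a) / Real.log 2 := by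
          gcongr
      _ = (x - a) / (a * Real.log 2) := by
          rw [div_div, mul_comm]
  linarith

/-- If `2^m ≤ 2^L · (m·R/w)^w` for some real `R ≥ 16` and natural numbers
`m ≥ w ≥ L ≥ 0` with `w ≥ 1`, then `m ≤ L + w·log₂(2·R·log₂ R)`. -/
theorem vc_bound_lemma (R : ℝ) (hR : 16 ≤ R) (m w L : ℕ)
    (hmw : w ≤ m) (hwL : L ≤ w) (hw : 1 ≤ w)
    (h : (2 : ℝ) ^ m ≤ 2 ^ L * ((m : ℝ) * R / (w : ℝ)) ^ w) :
    (m : ℝ) ≤ (L : ℝ) + (w : ℝ) * Real.logb 2 (2 * R * Real.logb 2 R) := by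
  have hlog2 : 0 < Real.log 2 := Real.log_pos one_lt_two
  have hlog2' : (0.6931 : ℝ) < Real.log 2 := by
    have := Real.log_two_gt_d9; linarith
  have hR0 : (0:ℝ) < R := by linarith
  set t := Real.logb 2 R with ht_def
  have h16 : Real.logb 2 16 = 4 := by
    rw [show (16:ℝ) = 2 ^ (4:ℕ) by norm_num, Real.logb_pow,
      Real.logb_self_eq_one one_lt_two]
    norm_num
  have ht4 : 4 ≤ t := by
    rw [← h16]; exact Real.logb_le_logb_of_le one_lt_two (by norm_num) hR
  have ht0 : 0 < t := by linarith
  -- log₂ t ≤ t - 2 for t ≥ 4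
  have hlogt : Real.logb 2 t ≤ t - 2 := by
    have := my_logb_le_add 4 t (by norm_num) ht4
    have h4 : Real.logb 2 4 = 2 := by
      rw [show (4:ℝ) = 2 ^ (2:ℕ) by norm_num, Real.logb_pow,
        Real.logb_self_eq_one one_lt_two]; norm_num
    rw [h4] at this
    have hdiv : (t - 4) / (4 * Real.log 2) ≤ t - 4 := by
      rw [div_le_iff₀ (by positivity)]
      nlinarith
    linarith
  -- basic positivity of w, m
  have hw0 : (0:ℝ) < (w:ℕ) := by exact_mod_cast hw
  have hm0 : (0:ℝ) < (m:ℝ) := by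
    exact_mod_cast Nat.lt_of_lt_of_le Nat.zero_lt_one (le_trans hw hmw)
  set x : ℝ := (m:ℝ) / (w:ℝ) with hx_def
  have hx1 : 1 ≤ x := (one_le_div hw0).mpr (by exact_mod_cast hmw)
  have hx0 : 0 < x := by linarith
  have hxw : x * w = m := div_mul_cancel₀ _ hw0.ne'
  -- take log₂ of the hypothesis
  have hxR0 : (0:ℝ) < x * R := by positivity
  have h' : (2:ℝ)^m ≤ 2^L * (x*R)^w := by
    have e : (m : ℝ) * R / (w : ℝ) = x * R := by
      rw [hx_def]; ring
    rwa [e] at h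
  have hlogh : (m:ℝ) ≤ (L:ℝ) + (w:ℝ) * (Real.logb 2 x + t) := by
    have hmono := Real.logb_le_logb_of_le one_lt_two (by positivity : (0:ℝ) < 2^m) h'
    rw [Real.logb_mul (by positivity) (by positivity), Real.logb_pow, Real.logb_pow, Real.logb_pow,
      Real.logb_self_eq_one one_lt_two,
      Real.logb_mul hx0.ne' hR0.ne'] at hmono
    calc (m:ℝ) = (m:ℝ) * 1 := by ring
    _ ≤ (L:ℝ) * 1 + (w:ℝ) * (Real.logb 2 x + t) := by linarith
    _ = (L:ℝ) + (w:ℝ) * (Real.logb 2 x + t) := by ring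
  -- show x ≤ 2t
  have hx2t : x ≤ 2 * t := by
    by_contra hcon
    push_neg at hcon
    have hL : (L:ℝ) ≤ (w:ℝ) := by exact_mod_cast hwL
    have hxineq : x ≤ 1 + Real.logb 2 x + t := by
      have : x * w ≤ (1 + Real.logb 2 x + t) * w := by
        rw [hxw]; nlinarith [hlogh]
      exact le_of_mul_le_mul_right (by linarith) hw0
    have hA := my_logb_le_add (2*t) x (by linarith) hcon.le
    have h2t : Real.logb 2 (2*t) = 1 + Real.logb 2 t := by
      rw [Real.logb_mul (by norm_num) ht0.ne', Real.logb_self_eq_one one_lt_two]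
    rw [h2t] at hA
    have hdiv : (x - 2*t) / (2*t * Real.log 2) < x - 2*t := by
      rw [div_lt_iff₀ (by positivity)]
      nlinarith [mul_pos (show (0:ℝ) < x - 2*t by linarith)
        (show (0:ℝ) < 2*t*Real.log 2 - 1 by nlinarith)]
    linarith
  -- conclude
  have hgoal : Real.logb 2 (2 * R * t) = 1 + t + Real.logb 2 t := by
    rw [Real.logb_mul (by positivity) ht0.ne', Real.logb_mul (by norm_num) hR0.ne',
      Real.logb_self_eq_one one_lt_two]
  rw [hgoal]
  have hlogx : Real.logb 2 x ≤ 1 + Real.logb 2 t := by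
    have := Real.logb_le_logb_of_le one_lt_two hx0 hx2t
    have h2t : Real.logb 2 (2*t) = 1 + Real.logb 2 t := by
      rw [Real.logb_mul (by norm_num) ht0.ne', Real.logb_self_eq_one one_lt_two]
    linarith [h2t ▸ this]
  nlinarith [hlogh, hlogx, hw0]
end

section
/- The function from ℝ^t to ℝ computing the coordinate-wise maximum (x₁,...,x_t) ↦ max{x₁,...,x_t} can be exactly represented by a ReLU feedforward neural network with ⌈log₂ t⌉ hidden layers and 3·t neurons per hidden layer. -/
/-- ReLU activation function `σ(x) = max{x,0}`. -/
noncomputable def relu (x : ℝ) : ℝ := max x 0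

/-- Outputs of the hidden layers of a fully connected ReLU feedforward network
with input dimension `t` and `r` neurons per hidden layer: `hiddenLayer t r w b x l i`
is the output of neuron `i` of hidden layer `l+1` (layers counted from `1`). -/
noncomputable def hiddenLayer (t r : ℕ) (w : ℕ → ℕ → ℕ → ℝ) (b : ℕ → ℕ → ℝ)
    (x : ℕ → ℝ) : ℕ → ℕ → ℝ
  | 0, i => relu ((∑ j ∈ Finset.range t, w 0 i j * x j) + b 0 i)
  | (l + 1), i =>
      relu ((∑ j ∈ Finset.range r, w (l + 1) i j * hiddenLayer t r w b x l j) + b (l + 1) i)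

/-- Output of a fully connected ReLU feedforward network with `L` hidden layers,
`r` neurons per hidden layer, input dimension `t`, inner weights `w`, biases `b`,
output weights `wout` and output bias `w0`. -/
noncomputable def fnn (t r L : ℕ) (w : ℕ → ℕ → ℕ → ℝ) (b : ℕ → ℕ → ℝ)
    (wout : ℕ → ℝ) (w0 : ℝ) (x : ℕ → ℝ) : ℝ :=
  match L with
  | 0 => (∑ i ∈ Finset.range t, wout i * x i) + w0
  | (l + 1) => (∑ i ∈ Finset.range r, wout i * hiddenLayer t r w b x l i) + w0

/- auxiliary development -/

noncomputable def vmax (t : ℕ) (x : ℕ → ℝ) : ℕ → ℕ → ℝ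
  | 0, k => x k
  | (l+1), k => if k + 2^l < t then max (vmax t x l k) (vmax t x l (k + 2^l)) else vmax t x l k

def part (t l k : ℕ) : ℕ := if k + 2^l < t then k + 2^l else k

noncomputable def coef (t l r k u : ℕ) : ℝ :=
  if r = 0 then (if u = k then 1 else 0) - (if u = part t l k then 1 else 0)
  else if r = 1 then (if u = part t l k then 1 else 0)
  else -(if u = part t l k then 1 else 0)

noncomputable def wgt (t : ℕ) : ℕ → ℕ → ℕ → ℝ
  | 0, i, j => coef t 0 (i % 3) (i / 3) j
  | (l+1), i, j => (if j % 3 = 2 then (-1:ℝ) else 1) * coef t (l+1) (i % 3) (i / 3) (j / 3)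

lemma part_lt (t l k : ℕ) (h : k < t) : part t l k < t := by unfold part; split <;> omega

lemma sum_ind (n k : ℕ) (hk : k < n) (f : ℕ → ℝ) :
    ∑ j ∈ Finset.range n, (if j = k then (1:ℝ) else 0) * f j = f k := by
  rw [Finset.sum_eq_single k]
  · simp
  · intro b _ hb; simp [hb]
  · intro h; exact absurd (Finset.mem_range.mpr hk) h

lemma sum_coef0 (t l k : ℕ) (hk : k < t) (V : ℕ → ℝ) :
    ∑ u ∈ Finset.range t, coef t l 0 k u * V u = V k - V (part t l k) := by
  have h : ∀ u, coef t l 0 k u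
      = (if u = k then (1:ℝ) else 0) - (if u = part t l k then 1 else 0) := fun u => by
    simp [coef]
  simp only [h, sub_mul]
  rw [Finset.sum_sub_distrib, sum_ind t k hk, sum_ind t _ (part_lt t l k hk)]

lemma sum_coef1 (t l k : ℕ) (hk : k < t) (V : ℕ → ℝ) :
    ∑ u ∈ Finset.range t, coef t l 1 k u * V u = V (part t l k) := by
  have h : ∀ u, coef t l 1 k u = (if u = part t l k then (1:ℝ) else 0) := fun u => by
    simp [coef]
  simp only [h]
  exact sum_ind t _ (part_lt t l k hk) V

lemma sum_coef2 (t l k : ℕ) (hk : k < t) (V : ℕ → ℝ) :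
    ∑ u ∈ Finset.range t, coef t l 2 k u * V u = -V (part t l k) := by
  have h : ∀ u, coef t l 2 k u = -(if u = part t l k then (1:ℝ) else 0) := fun u => by
    simp [coef]
  simp only [h, neg_mul]
  rw [Finset.sum_neg_distrib, sum_ind t _ (part_lt t l k hk)]

lemma combo (a b : ℝ) : relu (a - b) + relu b - relu (-b) = max a b := by
  unfold relu
  rcases le_total a b with h | h <;> rcases le_total b 0 with hb | hb <;>
    simp [max_def] <;> split_ifs <;> linarith

lemma vmax_succ (t : ℕ) (x : ℕ → ℝ) (l k : ℕ) :
    vmax t x (l+1) k = max (vmax t x l k) (vmax t x l (part t l k)) := by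
  rw [vmax, part]; split_ifs <;> simp

lemma sum3 (n : ℕ) (f : ℕ → ℝ) :
    ∑ j ∈ Finset.range (3*n), f j = ∑ u ∈ Finset.range n, (f (3*u) + f (3*u+1) + f (3*u+2)) := by
  induction n with
  | zero => simp
  | succ n ih =>
    have h : 3*(n+1) = 3*n+1+1+1 := by ring
    rw [h, Finset.sum_range_succ, Finset.sum_range_succ, Finset.sum_range_succ, ih,
      Finset.sum_range_succ]
    ring

lemma net (t : ℕ) (x : ℕ → ℝ) : ∀ l, ∀ k, k < t →
    hiddenLayer t (3*t) (wgt t) (fun _ _ => 0) x l (3*k)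
        = relu (vmax t x l k - vmax t x l (part t l k)) ∧
    hiddenLayer t (3*t) (wgt t) (fun _ _ => 0) x l (3*k+1)
        = relu (vmax t x l (part t l k)) ∧
    hiddenLayer t (3*t) (wgt t) (fun _ _ => 0) x l (3*k+2)
        = relu (-vmax t x l (part t l k)) := by
  intro l
  induction l with
  | zero =>
    intro k hk
    have e0 : (3*k) % 3 = 0 := by omega
    have e1 : (3*k+1) % 3 = 1 := by omega
    have e2 : (3*k+2) % 3 = 2 := by omega
    have d0 : (3*k) / 3 = k := by omega
    have d1 : (3*k+1) / 3 = k := by omega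
    have d2 : (3*k+2) / 3 = k := by omega
    refine ⟨?_, ?_, ?_⟩ <;>
      simp only [hiddenLayer, wgt, e0, e1, e2, d0, d1, d2, add_zero, vmax]
    · rw [sum_coef0 t 0 k hk x]
    · rw [sum_coef1 t 0 k hk x]
    · rw [sum_coef2 t 0 k hk x]
  | succ l ih =>
    intro k hk
    have e0 : (3*k) % 3 = 0 := by omega
    have e1 : (3*k+1) % 3 = 1 := by omega
    have e2 : (3*k+2) % 3 = 2 := by omega
    have d0 : (3*k) / 3 = k := by omega
    have d1 : (3*k+1) / 3 = k := by omega
    have d2 : (3*k+2) / 3 = k := by omega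
    have key : ∀ i r : ℕ, i % 3 = r → i / 3 = k → ∑ j ∈ Finset.range (3*t),
        wgt t (l+1) i j * hiddenLayer t (3*t) (wgt t) (fun _ _ => 0) x l j
        = ∑ u ∈ Finset.range t, coef t (l+1) r k u * vmax t x (l+1) u := by
      intro i r him hid
      rw [sum3]
      apply Finset.sum_congr rfl
      intro u hu
      have hut : u < t := Finset.mem_range.mp hu
      obtain ⟨h0, h1, h2⟩ := ih u hut
      have f0 : (3*u) % 3 = 0 := by omega
      have f1 : (3*u+1) % 3 = 1 := by omega
      have f2 : (3*u+2) % 3 = 2 := by omega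
      have g0 : (3*u) / 3 = u := by omega
      have g1 : (3*u+1) / 3 = u := by omega
      have g2 : (3*u+2) / 3 = u := by omega
      have w0v : wgt t (l+1) i (3*u) = coef t (l+1) r k u := by
        simp only [wgt, f0, g0, him, hid]; norm_num
      have w1v : wgt t (l+1) i (3*u+1) = coef t (l+1) r k u := by
        simp only [wgt, f1, g1, him, hid]; norm_num
      have w2v : wgt t (l+1) i (3*u+2) = -coef t (l+1) r k u := by
        simp only [wgt, f2, g2, him, hid]; norm_num
      rw [w0v, w1v, w2v, h0, h1, h2, vmax_succ t x l u,
        ← combo (vmax t x l u) (vmax t x l (part t l u))]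
      ring
    refine ⟨?_, ?_, ?_⟩ <;>
      simp only [hiddenLayer, add_zero]
    · rw [key (3*k) 0 e0 d0, sum_coef0 t (l+1) k hk]
    · rw [key (3*k+1) 1 e1 d1, sum_coef1 t (l+1) k hk]
    · rw [key (3*k+2) 2 e2 d2, sum_coef2 t (l+1) k hk]

lemma vwin (t : ℕ) (x : ℕ → ℝ) : ∀ l, ∀ k, k < t →
    ∀ hne : (Finset.Ico k (min (k + 2^l) t)).Nonempty,
    vmax t x l k = (Finset.Ico k (min (k + 2^l) t)).sup' hne x := by
  intro l
  induction l with
  | zero =>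
    intro k hk hne
    have h : Finset.Ico k (min (k + 2^0) t) = {k} := by
      rw [pow_zero, min_eq_left (by omega)]
      exact Nat.Ico_succ_singleton k
    rw [Finset.sup'_congr hne h (fun _ _ => rfl), Finset.sup'_singleton]
    rfl
  | succ l ih =>
    intro k hk hne
    have h2l : 0 < 2^l := Nat.pow_pos (by norm_num)
    have hpow : 2^(l+1) = 2^l + 2^l := by rw [pow_succ]; omega
    by_cases hlt : k + 2^l < t
    · have hne1 : (Finset.Ico k (min (k + 2^l) t)).Nonempty :=
        Finset.nonempty_Ico.mpr (by omega)
      have hne2 : (Finset.Ico (k + 2^l) (min (k + 2^l + 2^l) t)).Nonempty :=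
        Finset.nonempty_Ico.mpr (by omega)
      have hA : Finset.Ico k (min (k + 2^l) t) = Finset.Ico k (k + 2^l) := by
        rw [min_eq_left (by omega)]
      have hB : min (k + 2^l + 2^l) t = min (k + 2^(l+1)) t := by omega
      have hU : Finset.Ico k (k + 2^l) ∪ Finset.Ico (k + 2^l) (min (k + 2^(l+1)) t)
          = Finset.Ico k (min (k + 2^(l+1)) t) :=
        Finset.Ico_union_Ico_eq_Ico (by omega) (by omega)
      rw [vmax, if_pos hlt, ih k hk hne1, ih (k + 2^l) hlt hne2]
      rw [Finset.sup'_congr hne1 hA (fun _ _ => rfl)]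
      have hne2' : (Finset.Ico (k + 2^l) (min (k + 2^(l+1)) t)).Nonempty :=
        Finset.nonempty_Ico.mpr (by omega)
      have : (Finset.Ico (k + 2^l) (min (k + 2^l + 2^l) t)).sup' hne2 x
          = (Finset.Ico (k + 2^l) (min (k + 2^(l+1)) t)).sup' hne2' x := by
        apply Finset.sup'_congr hne2 (by rw [hB]) (fun _ _ => rfl)
      rw [this]
      have hneA : (Finset.Ico k (k + 2^l)).Nonempty := Finset.nonempty_Ico.mpr (by omega)
      rw [show ((Finset.Ico k (min (k + 2^(l+1)) t)).sup' hne x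
          = (Finset.Ico k (k + 2^l) ∪ Finset.Ico (k + 2^l) (min (k + 2^(l+1)) t)).sup'
            (by rw [hU]; exact hne) x) from
        (Finset.sup'_congr _ hU.symm (fun _ _ => rfl))]
      rw [Finset.sup'_union hneA hne2' x]
    · have hEq : min (k + 2^l) t = min (k + 2^(l+1)) t := by omega
      have hne1 : (Finset.Ico k (min (k + 2^l) t)).Nonempty :=
        Finset.nonempty_Ico.mpr (by omega)
      rw [vmax, if_neg hlt, ih k hk hne1]
      exact Finset.sup'_congr hne1 (by rw [hEq]) (fun _ _ => rfl)


/-- The coordinate-wise maximum `(x₁,…,x_t) ↦ max{x₁,…,x_t}` can be exactly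
represented by a ReLU feedforward neural network with `⌈log₂ t⌉` hidden layers
and `3·t` neurons per hidden layer. -/
theorem max_representable_by_fnn (t : ℕ) (ht : 1 ≤ t) :
    ∃ (w : ℕ → ℕ → ℕ → ℝ) (b : ℕ → ℕ → ℝ) (wout : ℕ → ℝ) (w0 : ℝ),
      ∀ x : ℕ → ℝ,
        fnn t (3 * t) (Nat.clog 2 t) w b wout w0 x
          = (Finset.range t).sup' (Finset.nonempty_range_iff.mpr (by omega)) x := by
  rcases eq_or_lt_of_le ht with h1 | h2
  · -- t = 1
    subst h1
    refine ⟨fun _ _ _ => 0, fun _ _ => 0, fun _ => 1, 0, ?_⟩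
    intro x
    have : Nat.clog 2 1 = 0 := Nat.clog_one_right 2
    rw [this]
    simp [fnn]
  · -- 2 ≤ t
    refine ⟨wgt t, fun _ _ => 0,
      fun i => if i = 0 then 1 else if i = 1 then 1 else if i = 2 then -1 else 0, 0, ?_⟩
    intro x
    have hL1 : 0 < Nat.clog 2 t := Nat.clog_pos one_lt_two h2
    obtain ⟨L', hLe⟩ : ∃ L', Nat.clog 2 t = L' + 1 :=
      ⟨Nat.clog 2 t - 1, by omega⟩
    rw [hLe]
    simp only [fnn, add_zero]
    have hsub : Finset.range 3 ⊆ Finset.range (3*t) := Finset.range_subset_range.mpr (by omega)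
    rw [← Finset.sum_subset hsub (by
      intro i _ hi
      simp only [Finset.mem_range, not_lt] at hi
      have h0 : i ≠ 0 := by omega
      have h1 : i ≠ 1 := by omega
      have h2i : i ≠ 2 := by omega
      simp [h0, h1, h2i])]
    rw [Finset.sum_range_succ, Finset.sum_range_succ, Finset.sum_range_succ]
    norm_num
    obtain ⟨n0, n1, n2⟩ := net t x L' 0 (by omega)
    rw [show (3*0 : ℕ) = 0 from rfl] at n0
    rw [show (3*0+1 : ℕ) = 1 from rfl] at n1
    rw [show (3*0+2 : ℕ) = 2 from rfl] at n2
    have hcc : relu (vmax t x L' 0 - vmax t x L' (part t L' 0))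
        + relu (vmax t x L' (part t L' 0)) + -relu (-vmax t x L' (part t L' 0))
        = vmax t x (L'+1) 0 := by
      rw [vmax_succ, ← combo (vmax t x L' 0) (vmax t x L' (part t L' 0))]; ring
    rw [n0, n1, n2, hcc]
    have hpow : t ≤ 2^(L'+1) := by
      rw [← hLe]; exact Nat.le_pow_clog one_lt_two t
    have hmin : min (0 + 2^(L'+1)) t = t := by omega
    have hne : (Finset.Ico 0 (min (0 + 2^(L'+1)) t)).Nonempty :=
      Finset.nonempty_Ico.mpr (by omega)
    rw [vwin t x (L'+1) 0 (by omega) hne]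
    apply Finset.sup'_congr hne (by rw [hmin, ← Finset.range_eq_Ico]) (fun _ _ => rfl)
end
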